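/- Let A, E ∈ ℝ^{n×n} be symmetric, let υ > 0, p ≥ 0, h ≥ 0, and let Z, δZ, Q ∈ ℝ^{n×n} and a diagonal matrix D ∈ ℝ^{n×n} satisfy: Z + δZ is orthogonal, ‖δZ‖ ≤ pυ, ‖E‖ ≤ p‖A‖υ, A + E = (Z + δZ) D (Z + δZ)ᵀ, and ‖Q − Z‖_F ≤ hυ. Then ‖off(Qᵀ A Q)‖_F ≤ ( h(hυ + 2(1 + pυ)) + √n · p · (3 + 3pυ) ) · ‖A‖ · υ. -/

import Mathlib

open Matrix

noncomputable def specNorm {m n : ℕ} (A : Matrix (Fin m) (Fin n) ℝ) : ℝ :=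
  ‖LinearMap.toContinuousLinearMap (Matrix.toEuclideanLin A)‖

noncomputable def frobNorm {m n : ℕ} (A : Matrix (Fin m) (Fin n) ℝ) : ℝ :=
  Real.sqrt (∑ p, ∑ q, (A p q) ^ 2)

def offDiag {n : ℕ} (A : Matrix (Fin n) (Fin n) ℝ) : Matrix (Fin n) (Fin n) ℝ :=
  fun p q => if p = q then 0 else A p q

def jacobiRot {n : ℕ} (i j : Fin n) (c s : ℝ) : Matrix (Fin n) (Fin n) ℝ :=
  fun p q =>
    if p = i ∧ q = i then c
    else if p = j ∧ q = j then c
    else if p = i ∧ q = j then s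
    else if p = j ∧ q = i then -s
    else if p = q then 1 else 0

open Classical in
noncomputable def eigValsDesc {n : ℕ} (A : Matrix (Fin n) (Fin n) ℝ) : Fin n → ℝ :=
  if hA : A.IsHermitian then
    fun k => (hA.eigenvalues ∘ Tuple.sort hA.eigenvalues) k.rev
  else 0

noncomputable def singValsDesc {m n : ℕ} (A : Matrix (Fin m) (Fin n) ℝ) : Fin n → ℝ :=
  fun k => Real.sqrt (eigValsDesc (Aᵀ * A) k)

/-! ### Auxiliary lemmas -/

lemma frobNorm_nonneg' {m n : ℕ} (A : Matrix (Fin m) (Fin n) ℝ) : 0 ≤ frobNorm A :=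
  Real.sqrt_nonneg _

lemma specNorm_nonneg' {m n : ℕ} (A : Matrix (Fin m) (Fin n) ℝ) : 0 ≤ specNorm A :=
  norm_nonneg _

section FrobI
attribute [local instance] Matrix.frobeniusNormedAddCommGroup

lemma frobNorm_eq_frobenius {m n : ℕ} (A : Matrix (Fin m) (Fin n) ℝ) : frobNorm A = ‖A‖ := by
  rw [Matrix.frobenius_norm_def, frobNorm, Real.sqrt_eq_rpow]
  norm_num [Real.norm_eq_abs, sq_abs]

lemma frobNorm_add_le {m n : ℕ} (A B : Matrix (Fin m) (Fin n) ℝ) :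
    frobNorm (A + B) ≤ frobNorm A + frobNorm B := by
  simp only [frobNorm_eq_frobenius]; exact norm_add_le _ _

lemma frobNorm_neg {m n : ℕ} (A : Matrix (Fin m) (Fin n) ℝ) : frobNorm (-A) = frobNorm A := by
  simp only [frobNorm_eq_frobenius]; exact norm_neg _

lemma frobNorm_transpose {m n : ℕ} (A : Matrix (Fin m) (Fin n) ℝ) :
    frobNorm Aᵀ = frobNorm A := by
  simp only [frobNorm_eq_frobenius]; exact Matrix.frobenius_norm_transpose _

end FrobI

lemma frobNorm_eq_cols {m n : ℕ} (A : Matrix (Fin m) (Fin n) ℝ) :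
    frobNorm A = Real.sqrt (∑ q, ‖(EuclideanSpace.equiv (Fin m) ℝ).symm (fun p => A p q)‖ ^ 2) := by
  rw [frobNorm, Finset.sum_comm]
  congr 1
  refine Finset.sum_congr rfl fun q _ => ?_
  rw [EuclideanSpace.norm_eq, Real.sq_sqrt (by positivity)]
  simp [Real.norm_eq_abs, sq_abs]

section Spec
open scoped Matrix.Norms.L2Operator

lemma specNorm_eq_l2 {m n : ℕ} (A : Matrix (Fin m) (Fin n) ℝ) : specNorm A = ‖A‖ := rfl

lemma specNorm_add_le {m n : ℕ} (A B : Matrix (Fin m) (Fin n) ℝ) :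
    specNorm (A + B) ≤ specNorm A + specNorm B := by
  simp only [specNorm_eq_l2]; exact norm_add_le _ _

lemma specNorm_neg {m n : ℕ} (A : Matrix (Fin m) (Fin n) ℝ) : specNorm (-A) = specNorm A := by
  simp only [specNorm_eq_l2]; exact norm_neg _

lemma specNorm_mul_le {m n k : ℕ} (A : Matrix (Fin m) (Fin n) ℝ) (B : Matrix (Fin n) (Fin k) ℝ) :
    specNorm (A * B) ≤ specNorm A * specNorm B := by
  simp only [specNorm_eq_l2]; exact Matrix.l2_opNorm_mul A B

lemma transpose_eq_conjTranspose' {m n : ℕ} (A : Matrix (Fin m) (Fin n) ℝ) : Aᵀ = Aᴴ := by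
  ext i j; simp [Matrix.conjTranspose_apply]

lemma specNorm_transpose {m n : ℕ} (A : Matrix (Fin m) (Fin n) ℝ) :
    specNorm Aᵀ = specNorm A := by
  simp only [specNorm_eq_l2, transpose_eq_conjTranspose', Matrix.l2_opNorm_conjTranspose]

lemma specNorm_one_le {n : ℕ} : specNorm (1 : Matrix (Fin n) (Fin n) ℝ) ≤ 1 := by
  rw [specNorm]
  refine ContinuousLinearMap.opNorm_le_bound _ zero_le_one fun x => ?_
  have : Matrix.toEuclideanLin (1 : Matrix (Fin n) (Fin n) ℝ) x = x := by
    rw [Matrix.toEuclideanLin_apply]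
    simp
  simp [this]

lemma specNorm_orth {n : ℕ} (M : Matrix (Fin n) (Fin n) ℝ) (hM : Mᵀ * M = 1) :
    specNorm M ≤ 1 := by
  have h2 : specNorm M * specNorm M ≤ 1 := by
    have := Matrix.l2_opNorm_conjTranspose_mul_self M
    rw [← transpose_eq_conjTranspose', hM] at this
    rw [specNorm_eq_l2, ← this]
    exact specNorm_one_le
  nlinarith [specNorm_nonneg' M]

lemma spec_mul_frob {m n k : ℕ} (A : Matrix (Fin m) (Fin n) ℝ) (B : Matrix (Fin n) (Fin k) ℝ) :
    frobNorm (A * B) ≤ specNorm A * frobNorm B := by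
  rw [frobNorm_eq_cols, frobNorm_eq_cols]
  have h1 : ∑ q, ‖(EuclideanSpace.equiv (Fin m) ℝ).symm (fun p => (A * B) p q)‖ ^ 2
      ≤ ∑ q, (specNorm A * ‖(EuclideanSpace.equiv (Fin n) ℝ).symm (fun p => B p q)‖) ^ 2 := by
    refine Finset.sum_le_sum fun q _ => ?_
    have hcol : (fun p => (A * B) p q)
        = A *ᵥ ((EuclideanSpace.equiv (Fin n) ℝ).symm (fun p => B p q)) := by
      funext p; simp [Matrix.mul_apply, Matrix.mulVec, dotProduct]
    rw [hcol]
    have := Matrix.l2_opNorm_mulVec A ((EuclideanSpace.equiv (Fin n) ℝ).symm (fun p => B p q))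
    exact pow_le_pow_left₀ (norm_nonneg _) this 2
  calc Real.sqrt (∑ q, ‖(EuclideanSpace.equiv (Fin m) ℝ).symm (fun p => (A * B) p q)‖ ^ 2)
      ≤ Real.sqrt (∑ q, (specNorm A * ‖(EuclideanSpace.equiv (Fin n) ℝ).symm (fun p => B p q)‖) ^ 2) :=
        Real.sqrt_le_sqrt h1
    _ = specNorm A * Real.sqrt (∑ q, ‖(EuclideanSpace.equiv (Fin n) ℝ).symm (fun p => B p q)‖ ^ 2) := by
        simp_rw [mul_pow, ← Finset.mul_sum]
        rw [Real.sqrt_mul (by positivity), Real.sqrt_sq (specNorm_nonneg' _)]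

lemma spec_le_frob {m n : ℕ} (A : Matrix (Fin m) (Fin n) ℝ) : specNorm A ≤ frobNorm A := by
  rw [specNorm]
  refine ContinuousLinearMap.opNorm_le_bound _ (frobNorm_nonneg' A) fun x => ?_
  have hx : ‖x‖ = Real.sqrt (∑ q, (x q) ^ 2) := by
    rw [EuclideanSpace.norm_eq]; simp [Real.norm_eq_abs, sq_abs]
  have hy : ‖(LinearMap.toContinuousLinearMap (Matrix.toEuclideanLin A)) x‖
      = Real.sqrt (∑ p, (∑ q, A p q * x q) ^ 2) := by
    rw [LinearMap.coe_toContinuousLinearMap', EuclideanSpace.norm_eq]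
    congr 1
    refine Finset.sum_congr rfl fun p _ => ?_
    simp [Real.norm_eq_abs, sq_abs, Matrix.toEuclideanLin_apply, Matrix.mulVec,
      dotProduct]
  rw [hy, hx, frobNorm, ← Real.sqrt_mul (by positivity)]
  apply Real.sqrt_le_sqrt
  rw [Finset.sum_mul]
  exact Finset.sum_le_sum fun p _ => Finset.sum_mul_sq_le_sq_mul_sq _ _ _

lemma frob_le_sqrt_spec {m n : ℕ} (A : Matrix (Fin m) (Fin n) ℝ) :
    frobNorm A ≤ Real.sqrt n * specNorm A := by
  have hcols : ∀ q : Fin n, Real.sqrt (∑ p, (A p q) ^ 2) ≤ specNorm A := by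
    intro q
    have h1 : (fun p => A p q) = A *ᵥ (Pi.single q 1) := by
      funext p; rw [Matrix.mulVec_single]; simp
    have h2 := Matrix.l2_opNorm_mulVec A ((WithLp.equiv 2 (Fin n → ℝ)).symm (Pi.single q 1))
    have h3 : ‖(WithLp.equiv 2 (Fin n → ℝ)).symm (Pi.single q 1)‖ = 1 := by
      have : (WithLp.equiv 2 (Fin n → ℝ)).symm (Pi.single q 1)
          = EuclideanSpace.single q (1 : ℝ) := rfl
      rw [this, EuclideanSpace.norm_single]; norm_num
    have h4 : ‖(EuclideanSpace.equiv (Fin m) ℝ).symm (A *ᵥ (Pi.single q 1))‖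
        = Real.sqrt (∑ p, (A p q) ^ 2) := by
      rw [EuclideanSpace.norm_eq, ← h1]
      simp [Real.norm_eq_abs, sq_abs]
    calc Real.sqrt (∑ p, (A p q) ^ 2)
        = ‖(EuclideanSpace.equiv (Fin m) ℝ).symm (A *ᵥ (Pi.single q 1))‖ := h4.symm
      _ ≤ specNorm A * ‖(WithLp.equiv 2 (Fin n → ℝ)).symm (Pi.single q 1)‖ := h2
      _ = specNorm A := by rw [h3, mul_one]
  have hkey : ∑ p, ∑ q, (A p q) ^ 2 ≤ (n : ℝ) * specNorm A ^ 2 := by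
    rw [Finset.sum_comm]
    calc ∑ q : Fin n, ∑ p, (A p q) ^ 2 ≤ ∑ _q : Fin n, specNorm A ^ 2 := by
          refine Finset.sum_le_sum fun q _ => ?_
          have := pow_le_pow_left₀ (Real.sqrt_nonneg _) (hcols q) 2
          rwa [Real.sq_sqrt (by positivity)] at this
      _ = (n : ℝ) * specNorm A ^ 2 := by simp [Finset.sum_const]
  calc frobNorm A ≤ Real.sqrt ((n : ℝ) * specNorm A ^ 2) := Real.sqrt_le_sqrt hkey
    _ = Real.sqrt n * specNorm A := by
        rw [Real.sqrt_mul (Nat.cast_nonneg n), Real.sqrt_sq (specNorm_nonneg' A)]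

end Spec

lemma frob_mul_spec {m n k : ℕ} (A : Matrix (Fin m) (Fin n) ℝ) (B : Matrix (Fin n) (Fin k) ℝ) :
    frobNorm (A * B) ≤ frobNorm A * specNorm B := by
  calc frobNorm (A * B) = frobNorm ((A * B)ᵀ) := (frobNorm_transpose _).symm
    _ = frobNorm (Bᵀ * Aᵀ) := by rw [Matrix.transpose_mul]
    _ ≤ specNorm Bᵀ * frobNorm Aᵀ := spec_mul_frob _ _
    _ = frobNorm A * specNorm B := by
        rw [specNorm_transpose, frobNorm_transpose, mul_comm]

lemma frob_offDiag_le {n : ℕ} (M D : Matrix (Fin n) (Fin n) ℝ) (hD : D.IsDiag) :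
    frobNorm (offDiag M) ≤ frobNorm (M - D) := by
  apply Real.sqrt_le_sqrt
  refine Finset.sum_le_sum fun p _ => Finset.sum_le_sum fun q _ => ?_
  by_cases hpq : p = q
  · simp [offDiag, hpq]
    positivity
  · have hD0 : D p q = 0 := hD hpq
    simp [offDiag, hpq, Matrix.sub_apply, hD0]

/-- Quantitative bound on `‖off(Qᵀ A Q)‖_F` in terms of the precision `υ`. -/
theorem off_QAQ_precision_bound {n : ℕ} (A E Z δZ Q D : Matrix (Fin n) (Fin n) ℝ)
    (hA : Aᵀ = A) (hE : Eᵀ = E)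
    (υ p h : ℝ) (hυ : 0 < υ) (hp : 0 ≤ p) (hh : 0 ≤ h)
    (horth : (Z + δZ)ᵀ * (Z + δZ) = 1)
    (hδZ : specNorm δZ ≤ p * υ)
    (hEb : specNorm E ≤ p * specNorm A * υ)
    (hD : D.IsDiag)
    (hfac : A + E = (Z + δZ) * D * (Z + δZ)ᵀ)
    (hQZ : frobNorm (Q - Z) ≤ h * υ) :
    frobNorm (offDiag (Qᵀ * A * Q)) ≤
      (h * (h * υ + 2 * (1 + p * υ)) + Real.sqrt n * p * (3 + 3 * p * υ)) *
        specNorm A * υ := by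
  set a := specNorm A with ha_def
  have ha : 0 ≤ a := specNorm_nonneg' A
  have hsn : (0 : ℝ) ≤ Real.sqrt n := Real.sqrt_nonneg _
  have hVVt : (Z + δZ) * (Z + δZ)ᵀ = 1 := mul_eq_one_comm.mp horth
  -- D in terms of the data
  have hD_eq : D = (Z + δZ)ᵀ * (A + E) * (Z + δZ) := by
    rw [hfac]
    have h1 : (Z + δZ)ᵀ * ((Z + δZ) * D * (Z + δZ)ᵀ) * (Z + δZ)
        = ((Z + δZ)ᵀ * (Z + δZ)) * D * ((Z + δZ)ᵀ * (Z + δZ)) := by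
      noncomm_ring
    rw [h1, horth, one_mul, mul_one]
  -- key algebraic identity
  have hident : Qᵀ * A * Q - D
      = (Q - Z)ᵀ * A * (Z + δZ) + Zᵀ * A * (Q - Z) + (Q - Z)ᵀ * A * (Q - Z)
        + -(δZᵀ * A * (Z + δZ)) + -(Zᵀ * A * δZ) + -((Q - Z)ᵀ * A * δZ)
        + -((Z + δZ)ᵀ * E * (Z + δZ)) := by
    rw [hD_eq]
    simp only [Matrix.transpose_add, Matrix.transpose_sub]
    noncomm_ring
  -- spectral norm facts
  have sδ : specNorm δZ ≤ p * υ := hδZ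
  have sδt : specNorm δZᵀ ≤ p * υ := by rw [specNorm_transpose]; exact hδZ
  have sV : specNorm (Z + δZ) ≤ 1 := specNorm_orth _ horth
  have sVt : specNorm (Z + δZ)ᵀ ≤ 1 := by
    refine specNorm_orth _ ?_
    rw [Matrix.transpose_transpose]; exact hVVt
  have sZt : specNorm Zᵀ ≤ 1 + p * υ := by
    have : Zᵀ = (Z + δZ)ᵀ + -δZᵀ := by
      simp [Matrix.transpose_add]
    rw [this]
    calc specNorm ((Z + δZ)ᵀ + -δZᵀ) ≤ specNorm (Z + δZ)ᵀ + specNorm (-δZᵀ) :=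
          specNorm_add_le _ _
      _ ≤ 1 + p * υ := by rw [specNorm_neg]; exact add_le_add sVt sδt
  have fF : frobNorm (Q - Z) ≤ h * υ := hQZ
  have fFt : frobNorm (Q - Z)ᵀ = frobNorm (Q - Z) := frobNorm_transpose _
  have sF : specNorm (Q - Z) ≤ h * υ := (spec_le_frob _).trans fF
  have hFA : frobNorm ((Q - Z)ᵀ * A) ≤ h * υ * a := by
    calc frobNorm ((Q - Z)ᵀ * A) ≤ frobNorm (Q - Z)ᵀ * specNorm A := frob_mul_spec _ _
      _ ≤ h * υ * a := by
          rw [fFt, ← ha_def]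
          exact mul_le_mul_of_nonneg_right fF ha
  have hhυ : 0 ≤ h * υ := mul_nonneg hh hυ.le
  have hpυ : 0 ≤ p * υ := mul_nonneg hp hυ.le
  -- seven bounds
  have b1 : frobNorm ((Q - Z)ᵀ * A * (Z + δZ)) ≤ h * υ * a := by
    calc frobNorm ((Q - Z)ᵀ * A * (Z + δZ))
        ≤ frobNorm ((Q - Z)ᵀ * A) * specNorm (Z + δZ) := frob_mul_spec _ _
      _ ≤ (h * υ * a) * 1 :=
          mul_le_mul hFA sV (specNorm_nonneg' _) (by positivity)
      _ = h * υ * a := mul_one _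
  have b2 : frobNorm (Zᵀ * A * (Q - Z)) ≤ (1 + p * υ) * a * (h * υ) := by
    calc frobNorm (Zᵀ * A * (Q - Z))
        ≤ specNorm (Zᵀ * A) * frobNorm (Q - Z) := spec_mul_frob _ _
      _ ≤ (1 + p * υ) * a * (h * υ) := by
          refine mul_le_mul ?_ fF (frobNorm_nonneg' _) (by positivity)
          calc specNorm (Zᵀ * A) ≤ specNorm Zᵀ * specNorm A := specNorm_mul_le _ _
            _ ≤ (1 + p * υ) * a := mul_le_mul_of_nonneg_right sZt ha
  have b3 : frobNorm ((Q - Z)ᵀ * A * (Q - Z)) ≤ h * υ * a * (h * υ) := by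
    calc frobNorm ((Q - Z)ᵀ * A * (Q - Z))
        ≤ frobNorm ((Q - Z)ᵀ * A) * specNorm (Q - Z) := frob_mul_spec _ _
      _ ≤ h * υ * a * (h * υ) :=
          mul_le_mul hFA sF (specNorm_nonneg' _) (by positivity)
  have b4 : frobNorm (δZᵀ * A * (Z + δZ)) ≤ Real.sqrt n * (p * υ * a) := by
    calc frobNorm (δZᵀ * A * (Z + δZ))
        ≤ Real.sqrt n * specNorm (δZᵀ * A * (Z + δZ)) := frob_le_sqrt_spec _
      _ ≤ Real.sqrt n * (p * υ * a) := by
          refine mul_le_mul_of_nonneg_left ?_ hsn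
          calc specNorm (δZᵀ * A * (Z + δZ))
              ≤ specNorm (δZᵀ * A) * specNorm (Z + δZ) := specNorm_mul_le _ _
            _ ≤ (p * υ * a) * 1 := by
                refine mul_le_mul ?_ sV (specNorm_nonneg' _) (by positivity)
                calc specNorm (δZᵀ * A) ≤ specNorm δZᵀ * specNorm A := specNorm_mul_le _ _
                  _ ≤ p * υ * a := mul_le_mul_of_nonneg_right sδt ha
            _ = p * υ * a := mul_one _
  have b5 : frobNorm (Zᵀ * A * δZ) ≤ Real.sqrt n * ((1 + p * υ) * a * (p * υ)) := by
    calc frobNorm (Zᵀ * A * δZ)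
        ≤ Real.sqrt n * specNorm (Zᵀ * A * δZ) := frob_le_sqrt_spec _
      _ ≤ Real.sqrt n * ((1 + p * υ) * a * (p * υ)) := by
          refine mul_le_mul_of_nonneg_left ?_ hsn
          calc specNorm (Zᵀ * A * δZ)
              ≤ specNorm (Zᵀ * A) * specNorm δZ := specNorm_mul_le _ _
            _ ≤ (1 + p * υ) * a * (p * υ) := by
                refine mul_le_mul ?_ sδ (specNorm_nonneg' _) (by positivity)
                calc specNorm (Zᵀ * A) ≤ specNorm Zᵀ * specNorm A := specNorm_mul_le _ _
                  _ ≤ (1 + p * υ) * a := mul_le_mul_of_nonneg_right sZt ha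
  have b6 : frobNorm ((Q - Z)ᵀ * A * δZ) ≤ h * υ * a * (p * υ) := by
    calc frobNorm ((Q - Z)ᵀ * A * δZ)
        ≤ frobNorm ((Q - Z)ᵀ * A) * specNorm δZ := frob_mul_spec _ _
      _ ≤ h * υ * a * (p * υ) :=
          mul_le_mul hFA sδ (specNorm_nonneg' _) (by positivity)
  have b7 : frobNorm ((Z + δZ)ᵀ * E * (Z + δZ)) ≤ Real.sqrt n * (p * a * υ) := by
    calc frobNorm ((Z + δZ)ᵀ * E * (Z + δZ))
        ≤ Real.sqrt n * specNorm ((Z + δZ)ᵀ * E * (Z + δZ)) := frob_le_sqrt_spec _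
      _ ≤ Real.sqrt n * (p * a * υ) := by
          refine mul_le_mul_of_nonneg_left ?_ hsn
          calc specNorm ((Z + δZ)ᵀ * E * (Z + δZ))
              ≤ specNorm ((Z + δZ)ᵀ * E) * specNorm (Z + δZ) := specNorm_mul_le _ _
            _ ≤ (1 * (p * a * υ)) * 1 := by
                refine mul_le_mul ?_ sV (specNorm_nonneg' _) (by positivity)
                calc specNorm ((Z + δZ)ᵀ * E)
                    ≤ specNorm (Z + δZ)ᵀ * specNorm E := specNorm_mul_le _ _
                  _ ≤ 1 * (p * a * υ) :=
                      mul_le_mul sVt hEb (specNorm_nonneg' _) zero_le_one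
            _ = p * a * υ := by ring
  -- assemble
  have hsum : frobNorm (Qᵀ * A * Q - D)
      ≤ frobNorm ((Q - Z)ᵀ * A * (Z + δZ)) + frobNorm (Zᵀ * A * (Q - Z))
        + frobNorm ((Q - Z)ᵀ * A * (Q - Z)) + frobNorm (δZᵀ * A * (Z + δZ))
        + frobNorm (Zᵀ * A * δZ) + frobNorm ((Q - Z)ᵀ * A * δZ)
        + frobNorm ((Z + δZ)ᵀ * E * (Z + δZ)) := by
    rw [hident]
    calc frobNorm ((Q - Z)ᵀ * A * (Z + δZ) + Zᵀ * A * (Q - Z) + (Q - Z)ᵀ * A * (Q - Z)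
          + -(δZᵀ * A * (Z + δZ)) + -(Zᵀ * A * δZ) + -((Q - Z)ᵀ * A * δZ)
          + -((Z + δZ)ᵀ * E * (Z + δZ)))
        ≤ frobNorm ((Q - Z)ᵀ * A * (Z + δZ) + Zᵀ * A * (Q - Z) + (Q - Z)ᵀ * A * (Q - Z)
          + -(δZᵀ * A * (Z + δZ)) + -(Zᵀ * A * δZ) + -((Q - Z)ᵀ * A * δZ))
          + frobNorm (-((Z + δZ)ᵀ * E * (Z + δZ))) := frobNorm_add_le _ _
      _ ≤ frobNorm ((Q - Z)ᵀ * A * (Z + δZ) + Zᵀ * A * (Q - Z) + (Q - Z)ᵀ * A * (Q - Z)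
          + -(δZᵀ * A * (Z + δZ)) + -(Zᵀ * A * δZ)) + frobNorm (-((Q - Z)ᵀ * A * δZ))
          + frobNorm (-((Z + δZ)ᵀ * E * (Z + δZ))) :=
          by gcongr ?_ + _; exact frobNorm_add_le _ _
      _ ≤ frobNorm ((Q - Z)ᵀ * A * (Z + δZ) + Zᵀ * A * (Q - Z) + (Q - Z)ᵀ * A * (Q - Z)
          + -(δZᵀ * A * (Z + δZ))) + frobNorm (-(Zᵀ * A * δZ)) + frobNorm (-((Q - Z)ᵀ * A * δZ))
          + frobNorm (-((Z + δZ)ᵀ * E * (Z + δZ))) := by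
          gcongr ?_ + _ + _
          exact frobNorm_add_le _ _
      _ ≤ frobNorm ((Q - Z)ᵀ * A * (Z + δZ) + Zᵀ * A * (Q - Z) + (Q - Z)ᵀ * A * (Q - Z))
          + frobNorm (-(δZᵀ * A * (Z + δZ))) + frobNorm (-(Zᵀ * A * δZ))
          + frobNorm (-((Q - Z)ᵀ * A * δZ)) + frobNorm (-((Z + δZ)ᵀ * E * (Z + δZ))) := by
          gcongr ?_ + _ + _ + _
          exact frobNorm_add_le _ _
      _ ≤ frobNorm ((Q - Z)ᵀ * A * (Z + δZ) + Zᵀ * A * (Q - Z))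
          + frobNorm ((Q - Z)ᵀ * A * (Q - Z))
          + frobNorm (-(δZᵀ * A * (Z + δZ))) + frobNorm (-(Zᵀ * A * δZ))
          + frobNorm (-((Q - Z)ᵀ * A * δZ)) + frobNorm (-((Z + δZ)ᵀ * E * (Z + δZ))) := by
          gcongr ?_ + _ + _ + _ + _
          exact frobNorm_add_le _ _
      _ ≤ frobNorm ((Q - Z)ᵀ * A * (Z + δZ)) + frobNorm (Zᵀ * A * (Q - Z))
          + frobNorm ((Q - Z)ᵀ * A * (Q - Z))
          + frobNorm (-(δZᵀ * A * (Z + δZ))) + frobNorm (-(Zᵀ * A * δZ))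
          + frobNorm (-((Q - Z)ᵀ * A * δZ)) + frobNorm (-((Z + δZ)ᵀ * E * (Z + δZ))) := by
          gcongr ?_ + _ + _ + _ + _ + _
          exact frobNorm_add_le _ _
      _ = frobNorm ((Q - Z)ᵀ * A * (Z + δZ)) + frobNorm (Zᵀ * A * (Q - Z))
          + frobNorm ((Q - Z)ᵀ * A * (Q - Z)) + frobNorm (δZᵀ * A * (Z + δZ))
          + frobNorm (Zᵀ * A * δZ) + frobNorm ((Q - Z)ᵀ * A * δZ)
          + frobNorm ((Z + δZ)ᵀ * E * (Z + δZ)) := by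
          simp only [frobNorm_neg]
  have hfinal : frobNorm (offDiag (Qᵀ * A * Q)) ≤
      h * υ * a + (1 + p * υ) * a * (h * υ) + h * υ * a * (h * υ)
        + Real.sqrt n * (p * υ * a) + Real.sqrt n * ((1 + p * υ) * a * (p * υ))
        + h * υ * a * (p * υ) + Real.sqrt n * (p * a * υ) := by
    calc frobNorm (offDiag (Qᵀ * A * Q)) ≤ frobNorm (Qᵀ * A * Q - D) :=
          frob_offDiag_le _ _ hD
      _ ≤ _ := hsum
      _ ≤ _ := by
          gcongr <;> first
            | exact b1 | exact b2 | exact b3 | exact b4 | exact b5 | exact b6 | exact b7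
  refine hfinal.trans ?_
  nlinarith [mul_nonneg (mul_nonneg (mul_nonneg hsn (mul_nonneg hp hp)) ha)
      (mul_nonneg hυ.le hυ.le), mul_nonneg (mul_nonneg hhυ hpυ) ha,
    mul_nonneg (mul_nonneg hsn hpυ) ha]
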